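/- Let β > 0, γ ≥ 0, and let u, f be continuous real-valued functions on (0,∞) with 0 ≤ u ≤ 1, 0 ≤ f ≤ 1, lim_{r→0} u(r) = 1, f twice continuously differentiable on (0,∞) satisfying (r² f'(r))' = β f(r) u(r)² + γ r² f(r)(f(r)² − 1) for all r > 0, and with finite weighted Dirichlet integral ∫₀^∞ r² f'(r)² dr < ∞. Then lim_{r→0} r² f'(r) = 0 and, for all r > 0, r² f'(r) = ∫₀^r [β f(ρ) u(ρ)² + γ ρ² f(ρ)(f(ρ)² − 1)] dρ. -/

import Mathlib

open MeasureTheory Filter Set Topology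

noncomputable section

/-- for a solution of `(r² f')' = β f u² + γ r² f(f²−1)` with `0 ≤ u,f ≤ 1`,
`u → 1` at `0⁺` and finite weighted Dirichlet integral, one has
`lim_{r→0⁺} r² f'(r) = 0` and the integral representation
`r² f'(r) = ∫₀^r [β f u² + γ ρ² f(f²−1)] dρ`. -/
theorem rsq_fprime_representation (β γ : ℝ) (hβ : 0 < β) (hγ : 0 ≤ γ)
    (u f f' : ℝ → ℝ)
    (hu_cont : ContinuousOn u (Ioi 0))
    (hf_cont : ContinuousOn f (Ioi 0))
    (hu01 : ∀ r : ℝ, 0 < r → 0 ≤ u r ∧ u r ≤ 1)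
    (hf01 : ∀ r : ℝ, 0 < r → 0 ≤ f r ∧ f r ≤ 1)
    (hu0 : Tendsto u (𝓝[>] (0 : ℝ)) (𝓝 1))
    (hf' : ∀ r : ℝ, 0 < r → HasDerivAt f (f' r) r)
    (heq : ∀ r : ℝ, 0 < r →
      HasDerivAt (fun s : ℝ => s ^ 2 * f' s)
        (β * f r * u r ^ 2 + γ * r ^ 2 * f r * (f r ^ 2 - 1)) r)
    (hfin : IntegrableOn (fun r : ℝ => r ^ 2 * f' r ^ 2) (Ioi 0)) :
    Tendsto (fun r : ℝ => r ^ 2 * f' r) (𝓝[>] (0 : ℝ)) (𝓝 0) ∧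
      ∀ r : ℝ, 0 < r →
        r ^ 2 * f' r =
          ∫ ρ in Ioc (0 : ℝ) r,
            (β * f ρ * u ρ ^ 2 + γ * ρ ^ 2 * f ρ * (f ρ ^ 2 - 1)) := by
  set h : ℝ → ℝ := fun ρ => β * f ρ * u ρ ^ 2 + γ * ρ ^ 2 * f ρ * (f ρ ^ 2 - 1) with hhdef
  set g : ℝ → ℝ := fun s => s ^ 2 * f' s with hgdef
  set G : ℝ → ℝ := fun r => ∫ ρ in Ioc (0 : ℝ) r, h ρ with hGdef
  -- continuity of h on Ioi 0
  have hcont : ContinuousOn h (Ioi 0) := by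
    apply ContinuousOn.add
    · exact (continuousOn_const.mul hf_cont).mul (hu_cont.pow 2)
    · exact (((continuousOn_const.mul ((continuous_pow 2).continuousOn)).mul hf_cont).mul
        ((hf_cont.pow 2).sub continuousOn_const))
  -- pointwise bound on h
  have hbound : ∀ ρ : ℝ, 0 < ρ → |h ρ| ≤ β + γ * ρ ^ 2 := by
    intro ρ hρ
    obtain ⟨hf0, hf1⟩ := hf01 ρ hρ
    obtain ⟨hu0', hu1⟩ := hu01 ρ hρ
    have h1 : |β * f ρ * u ρ ^ 2| ≤ β := by
      rw [abs_of_nonneg (by positivity)]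
      have hu2 : u ρ ^ 2 ≤ 1 := by nlinarith
      have hfu : f ρ * u ρ ^ 2 ≤ 1 := by nlinarith [sq_nonneg (u ρ)]
      nlinarith
    have h2 : |γ * ρ ^ 2 * f ρ * (f ρ ^ 2 - 1)| ≤ γ * ρ ^ 2 := by
      rw [abs_mul]
      have : |f ρ ^ 2 - 1| ≤ 1 := by rw [abs_le]; constructor <;> nlinarith
      have h3 : |γ * ρ ^ 2 * f ρ| ≤ γ * ρ ^ 2 := by
        rw [abs_of_nonneg (by positivity)]
        have hρ2 : (0:ℝ) ≤ γ * ρ ^ 2 := by positivity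
        nlinarith [mul_le_mul_of_nonneg_left hf1 hρ2]
      calc |γ * ρ ^ 2 * f ρ| * |f ρ ^ 2 - 1| ≤ (γ * ρ ^ 2) * 1 := by
            apply mul_le_mul h3 this (abs_nonneg _) (by positivity)
        _ = γ * ρ ^ 2 := by ring
    calc |h ρ| ≤ |β * f ρ * u ρ ^ 2| + |γ * ρ ^ 2 * f ρ * (f ρ ^ 2 - 1)| := abs_add_le _ _
      _ ≤ β + γ * ρ ^ 2 := add_le_add h1 h2
  -- integrability of h on Ioc 0 r
  have hint : ∀ r : ℝ, 0 < r → IntegrableOn h (Ioc 0 r) := by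
    intro r hr
    have hmeas : AEStronglyMeasurable h (volume.restrict (Ioc 0 r)) :=
      (hcont.mono Ioc_subset_Ioi_self).aestronglyMeasurable measurableSet_Ioc
    refine Integrable.mono' (integrable_const (β + γ * r ^ 2)) hmeas ?_
    filter_upwards [ae_restrict_mem measurableSet_Ioc] with x hx
    calc ‖h x‖ = |h x| := rfl
      _ ≤ β + γ * x ^ 2 := hbound x hx.1
      _ ≤ β + γ * r ^ 2 := by
          have hx2 : x ^ 2 ≤ r ^ 2 := by nlinarith [hx.1, hx.2]
          nlinarith [mul_le_mul_of_nonneg_left hx2 hγ]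
  have hii : ∀ s r : ℝ, 0 ≤ s → s ≤ r → IntervalIntegrable h volume s r := by
    intro s r hs hsr
    rw [intervalIntegrable_iff, uIoc_of_le hsr]
    rcases lt_or_ge 0 r with hr | hr
    · exact (hint r hr).mono (Ioc_subset_Ioc hs le_rfl) le_rfl
    · have he : Ioc s r = ∅ := Ioc_eq_empty (by intro hlt; linarith)
      rw [he]; exact integrableOn_empty
  -- FTC: g r - g s = ∫ s..r h for 0 < s ≤ r
  have hftc : ∀ s r : ℝ, 0 < s → s ≤ r → g r - g s = ∫ x in s..r, h x := by
    intro s r hs hsr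
    rw [eq_comm]
    apply intervalIntegral.integral_eq_sub_of_hasDerivAt
    · intro x hx
      rw [uIcc_of_le hsr] at hx
      exact heq x (lt_of_lt_of_le hs hx.1)
    · exact hii s r hs.le hsr
  -- G r - G s = ∫ s..r h
  have hGdiff : ∀ s r : ℝ, 0 < s → s ≤ r → G r - G s = ∫ x in s..r, h x := by
    intro s r hs hsr
    have h1 : G r = ∫ x in (0:ℝ)..r, h x := (intervalIntegral.integral_of_le (hs.le.trans hsr)).symm
    have h2 : G s = ∫ x in (0:ℝ)..s, h x := (intervalIntegral.integral_of_le hs.le).symm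
    rw [h1, h2, ← intervalIntegral.integral_add_adjacent_intervals (hii 0 s le_rfl hs.le)
      (hii s r hs.le hsr)]
    ring
  set c : ℝ := g 1 - G 1 with hcdef
  have key : ∀ r : ℝ, 0 < r → g r = c + G r := by
    intro r hr
    rcases le_total r 1 with h1 | h1
    · have := hftc r 1 hr h1
      have h2 := hGdiff r 1 hr h1
      rw [hcdef]; linarith
    · have := hftc 1 r one_pos h1
      have h2 := hGdiff 1 r one_pos h1
      rw [hcdef]; linarith
  -- G → 0 at 0+
  have hGlim : Tendsto G (𝓝[>] (0 : ℝ)) (𝓝 0) := by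
    have hb : ∀ r ∈ Ioo (0:ℝ) 1, ‖G r‖ ≤ (β + γ) * r := by
      intro r hr
      have hle : ‖G r‖ ≤ (β + γ * r ^ 2) * (volume (Ioc (0:ℝ) r)).toReal := by
        refine norm_setIntegral_le_of_norm_le_const (by simp) ?_
        intro x hx
        calc ‖h x‖ = |h x| := rfl
          _ ≤ β + γ * x ^ 2 := hbound x hx.1
          _ ≤ β + γ * r ^ 2 := by
              have hx2 : x ^ 2 ≤ r ^ 2 := by nlinarith [hx.1, hx.2]
              nlinarith [mul_le_mul_of_nonneg_left hx2 hγ]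
      rw [Real.volume_Ioc] at hle
      rw [ENNReal.toReal_ofReal (by linarith [hr.1])] at hle
      have h2 : γ * r ^ 2 ≤ γ := by
        nlinarith [mul_le_mul_of_nonneg_left (show r ^ 2 ≤ 1 by nlinarith [hr.1, hr.2]) hγ]
      have : (β + γ * r ^ 2) * (r - 0) ≤ (β + γ) * r := by
        nlinarith [mul_le_mul_of_nonneg_right h2 hr.1.le]
      linarith
    have hlim : Tendsto (fun r : ℝ => (β + γ) * r) (𝓝[>] (0 : ℝ)) (𝓝 0) := by
      have : Tendsto (fun r : ℝ => (β + γ) * r) (𝓝 (0 : ℝ)) (𝓝 ((β + γ) * 0)) :=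
        (continuous_const.mul continuous_id).tendsto 0
      rw [mul_zero] at this
      exact this.mono_left nhdsWithin_le_nhds
    apply squeeze_zero_norm' _ hlim
    filter_upwards [Ioo_mem_nhdsGT one_pos] with r hr using hb r hr
  have hglim : Tendsto g (𝓝[>] (0 : ℝ)) (𝓝 c) := by
    have : Tendsto (fun r => c + G r) (𝓝[>] (0 : ℝ)) (𝓝 (c + 0)) := tendsto_const_nhds.add hGlim
    rw [add_zero] at this
    apply this.congr'
    filter_upwards [self_mem_nhdsWithin] with r hr using (key r hr).symm
  -- c = 0
  have hc0 : c = 0 := by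
    by_contra hc
    have hpos : 0 < |c| / 2 := by positivity
    have hev : ∀ᶠ r in 𝓝[>] (0 : ℝ), |g r - c| < |c| / 2 := by
      have := hglim
      rw [Metric.tendsto_nhds] at this
      simpa [Real.dist_eq] using this (|c|/2) hpos
    obtain ⟨ε, hε, hball⟩ := Metric.mem_nhdsWithin_iff.mp hev
    -- on Ioo 0 ε, |g r| ≥ |c|/2
    have hlow : ∀ r ∈ Ioo (0:ℝ) ε, |c| / 2 ≤ |g r| := by
      intro r hr
      have : |g r - c| < |c| / 2 := by
        apply hball
        refine ⟨?_, hr.1⟩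
        rw [Metric.mem_ball, Real.dist_eq, sub_zero, abs_of_pos hr.1]
        exact hr.2
      have := abs_sub_abs_le_abs_sub c (g r)
      rw [abs_sub_comm c (g r)] at this
      linarith
    -- the comparison function
    set ψ : ℝ → ℝ := fun x => c ^ 2 / 4 * (x ^ 2)⁻¹ with hψdef
    have hψint : IntegrableOn ψ (Ioo 0 ε) := by
      refine Integrable.mono' ((hfin.mono Ioo_subset_Ioi_self le_rfl)) ?_ ?_
      · exact ((measurable_id.pow_const 2).inv.const_mul _).aestronglyMeasurable
      · filter_upwards [ae_restrict_mem measurableSet_Ioo] with x hx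
        have hx0 : 0 < x := hx.1
        have hgx : |c| / 2 ≤ |g x| := hlow x hx
        have h1 : c ^ 2 / 4 ≤ g x ^ 2 := by
          have h := pow_le_pow_left₀ (by positivity : (0:ℝ) ≤ |c| / 2) hgx 2
          rw [div_pow, sq_abs, sq_abs] at h
          norm_num at h
          linarith
        have hxne : x ≠ 0 := hx0.ne'
        have hgx2 : g x = x ^ 2 * f' x := rfl
        have hnorm : ‖ψ x‖ = c ^ 2 / 4 * (x ^ 2)⁻¹ := by
          rw [Real.norm_eq_abs]
          exact abs_of_nonneg (by positivity)
        rw [hnorm]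
        calc c ^ 2 / 4 * (x ^ 2)⁻¹ ≤ g x ^ 2 * (x ^ 2)⁻¹ :=
              mul_le_mul_of_nonneg_right h1 (by positivity)
          _ = x ^ 2 * f' x ^ 2 := by rw [hgx2]; field_simp
    have hrpow : IntegrableOn (fun x : ℝ => x ^ (-2 : ℝ)) (Ioo 0 ε) := by
      have : IntegrableOn (fun x : ℝ => 4 / c ^ 2 * ψ x) (Ioo 0 ε) := hψint.const_mul _
      apply this.congr_fun _ measurableSet_Ioo
      intro x hx
      have hc2 : c ^ 2 ≠ 0 := pow_ne_zero 2 hc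
      have hx0 : (0:ℝ) < x := hx.1
      have hxr : x ^ (-2 : ℝ) = (x ^ 2)⁻¹ := by
        rw [Real.rpow_neg hx0.le, ← Real.rpow_natCast x 2]
        norm_num
      show 4 / c ^ 2 * (c ^ 2 / 4 * (x ^ 2)⁻¹) = x ^ (-2 : ℝ)
      rw [hxr]
      field_simp
    rw [intervalIntegral.integrableOn_Ioo_rpow_iff hε] at hrpow
    norm_num at hrpow
  -- conclusions
  constructor
  · rw [hc0] at hglim; exact hglim
  · intro r hr
    have := key r hr
    rw [hc0, zero_add] at this
    exact this
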